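/- arXiv:1701.02302 — 2 statements merged into one kernel-verified Lean document; each statement's English description precedes it below -/
import Mathlib

section
/- For every d ≥ 1 and every k < d there is no polynomial p ∈ MvPolynomial (Fin d) ℝ with totalDegree p ≤ k such that p(u)·parity(u) > 0 for every cube point u ∈ {−1,1}^d. That is, the parity function on d bits is not computed by any polynomial threshold function of degree less than d (Minsky–Papert). -/
open MvPolynomial Finset

/-- `u` is a point of the cube `{−1,1}^d`. -/
def Cube {d : ℕ} (u : Fin d → ℝ) : Prop := ∀ i, u i = 1 ∨ u i = -1

/-- The cube point associated to a sign pattern. -/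
noncomputable def chi {d : ℕ} (s : Fin d → Bool) : Fin d → ℝ :=
  fun i => if s i then 1 else -1

lemma chi_cube {d : ℕ} (s : Fin d → Bool) : Cube (chi s) := fun i => by
  unfold chi; split <;> simp

lemma chi_update {d : ℕ} (s : Fin d → Bool) (j : Fin d) (b : Bool) :
    chi (Function.update s j b) = Function.update (chi s) j (if b then 1 else -1) := by
  funext i
  by_cases h : i = j
  · subst h; simp [chi]
  · simp [chi, Function.update_of_ne h]

lemma key_cancel {d : ℕ} (m : Fin d →₀ ℕ) (j : Fin d) (hmj : m j = 0) :
    ∑ s : Fin d → Bool, ∏ i, (chi s i) ^ (m i + 1) = 0 := by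
  set f : (Fin d → Bool) → ℝ := fun s => ∏ i, (chi s i) ^ (m i + 1) with hf
  have flipinv : Function.Involutive (fun s : Fin d → Bool => Function.update s j (!s j)) := by
    intro s
    funext i
    by_cases h : i = j
    · subst h; simp
    · simp [Function.update_of_ne h]
  have hneg : ∀ s, f (Function.update s j (!s j)) = - f s := by
    intro s
    have hprod : ∀ t : Fin d → Bool,
        f t = (chi t j) * ∏ i ∈ {j}ᶜ, (chi t i) ^ (m i + 1) := by
      intro t
      rw [hf]
      simp only
      rw [Fintype.prod_eq_mul_prod_compl j]
      congr 1
      rw [hmj]; ring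
    rw [hprod, hprod]
    have h1 : chi (Function.update s j (!s j)) j = - chi s j := by
      rw [chi_update, Function.update_self]
      cases hsj : s j <;> simp [chi, hsj]
    have h2 : ∏ i ∈ {j}ᶜ, (chi (Function.update s j (!s j)) i) ^ (m i + 1)
        = ∏ i ∈ {j}ᶜ, (chi s i) ^ (m i + 1) := by
      apply Finset.prod_congr rfl
      intro i hi
      have : i ≠ j := by simpa using hi
      rw [chi_update, Function.update_of_ne this]
    rw [h1, h2]; ring
  have hsum : ∑ s : Fin d → Bool, f s
      = ∑ s : Fin d → Bool, f (Function.update s j (!s j)) :=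
    (Function.Bijective.sum_comp flipinv.bijective f).symm
  have : ∑ s : Fin d → Bool, f s = - ∑ s : Fin d → Bool, f s := by
    calc ∑ s : Fin d → Bool, f s = ∑ s : Fin d → Bool, f (Function.update s j (!s j)) := hsum
    _ = ∑ s : Fin d → Bool, - f s := by simp only [hneg]
    _ = - ∑ s : Fin d → Bool, f s := by rw [Finset.sum_neg_distrib]
  linarith

/-- Minsky–Papert: for `k < d` there is no polynomial of total degree at most `k` whose
sign on the cube `{−1,1}^d` computes the parity function on `d` bits. -/
theorem parity_not_polythr {d k : ℕ} (hd : 1 ≤ d) (hk : k < d) :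
    ¬ ∃ p : MvPolynomial (Fin d) ℝ, p.totalDegree ≤ k ∧
      ∀ u : Fin d → ℝ, Cube u → 0 < MvPolynomial.eval u p * ∏ i, u i := by
  rintro ⟨p, hdeg, hpos⟩
  set S : ℝ := ∑ s : Fin d → Bool, (MvPolynomial.eval (chi s) p) * ∏ i, chi s i with hS
  have hSpos : 0 < S := by
    apply Finset.sum_pos
    · intro s _
      exact hpos (chi s) (chi_cube s)
    · exact Finset.univ_nonempty
  have hSzero : S = 0 := by
    have hterm : ∀ s : Fin d → Bool,
        (MvPolynomial.eval (chi s) p) * ∏ i, chi s i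
        = ∑ m ∈ p.support, coeff m p * ∏ i, (chi s i) ^ (m i + 1) := by
      intro s
      rw [MvPolynomial.eval_eq']
      rw [Finset.sum_mul]
      apply Finset.sum_congr rfl
      intro m _
      rw [mul_assoc]
      congr 1
      rw [← Finset.prod_mul_distrib]
      apply Finset.prod_congr rfl
      intro i _
      rw [pow_succ]
    rw [hS]
    simp_rw [hterm]
    rw [Finset.sum_comm]
    apply Finset.sum_eq_zero
    intro m hm
    simp_rw [← Finset.mul_sum]
    have : ∃ j, m j = 0 := by
      by_contra h
      push_neg at h
      have hle : d ≤ ∑ i, m i := by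
        calc d = ∑ _i : Fin d, 1 := by simp
        _ ≤ ∑ i, m i := Finset.sum_le_sum fun i _ => Nat.one_le_iff_ne_zero.mpr (h i)
      have hup : ∑ i, m i ≤ p.totalDegree := by
        have := MvPolynomial.le_totalDegree hm
        rwa [Finsupp.sum_fintype] at this
        intro; rfl
      omega
    obtain ⟨j, hj⟩ := this
    rw [key_cancel m j hj, mul_zero]
  linarith
end

section
/- Let F be a finite field with q elements, d a natural number, and V an F-vector space of dimension d equipped with a linear order ⊴. Suppose g_1, …, g_k ∈ V are pairwise distinct and, for each i ∈ {1,…,k}, g_i ⊴ v for every point v of the affine span of {g_i, g_{i+1}, …, g_k} over F. Then there exists a (d+1)-tuple (f_0, …, f_d) of points of V such that the affine span of {f_0,…,f_d} is all of V, f_j ⊴ v for every point v of the affine span of {f_j,…,f_d} for every j, and (g_1,…,g_k) is a subsequence of (f_0,…,f_d): there is a strictly increasing map ι : {1,…,k} → {0,…,d} with f_{ι(i)} = g_i for all i. -/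
open Module Submodule
set_option linter.unusedSectionVars false
set_option maxHeartbeats 1000000

section Aux

lemma succ_image_Ici {n : ℕ} (i : Fin n) :
    Fin.succ '' Set.Ici i = Set.Ici i.succ := by
  ext j
  constructor
  · rintro ⟨j', hj', rfl⟩
    exact Fin.succ_le_succ_iff.2 hj'
  · intro hj
    have h0 : j ≠ 0 := by
      rintro rfl
      exact absurd (lt_of_lt_of_le (Fin.succ_pos i) hj) (Fin.not_lt_zero _)
    obtain ⟨j', rfl⟩ := Fin.exists_succ_eq.2 h0
    exact ⟨j', Fin.succ_le_succ_iff.1 hj, rfl⟩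

lemma Ici_zero_fin {n : ℕ} : Set.Ici (0 : Fin (n+1)) = Set.univ :=
  Set.eq_univ_of_forall fun j => Fin.zero_le j


variable {F V : Type} [Field F] [Fintype F] [AddCommGroup V] [Module F V] [Fintype V]
  [LinearOrder V]

lemma linear_hyperplane (D W : Submodule F V) (hDW : D ≤ W) (v : V) (hvW : v ∈ W)
    (hvD : v ∉ D) (n : ℕ) (hW : finrank F W = n + 1) :
    ∃ W' : Submodule F V, D ≤ W' ∧ W' ≤ W ∧ v ∉ W' ∧ finrank F W' = n := by
  classical
  have : Finite (Submodule F V) := Finite.of_injective _ SetLike.coe_injective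
  set S : Set (Submodule F V) := {U | D ≤ U ∧ U ≤ W ∧ v ∉ U} with hS
  have hne : S.Nonempty := ⟨D, le_rfl, hDW, hvD⟩
  have hfin : S.Finite := Set.toFinite _
  obtain ⟨U, hUS, hmax⟩ := Set.Finite.exists_maximalFor (fun U : Submodule F V => finrank F U) S hfin hne
  obtain ⟨hDU, hUW, hvU⟩ := hUS
  -- key: W ≤ U ⊔ span {v}
  have key : W ≤ U ⊔ span F {v} := by
    intro w hw
    by_cases hwU : w ∈ U
    · exact mem_sup_left hwU
    · -- v ∈ U ⊔ span {w}, else contradiction with maximality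
      have hvUw : v ∈ U ⊔ span F {w} := by
        by_contra hnot
        have hmem : U ⊔ span F {w} ∈ S :=
          ⟨hDU.trans le_sup_left, sup_le hUW (by simpa [span_le] using hw), hnot⟩
        have hlt : U < U ⊔ span F {w} := by
          refine lt_of_le_of_ne le_sup_left ?_
          intro h
          exact hwU (h ▸ mem_sup_right (mem_span_singleton_self w))
        have := finrank_lt_finrank_of_lt (t := U ⊔ span F {w}) hlt
        have heq : finrank F ↥(U ⊔ span F {w}) ≤ finrank F U := hmax hmem (le_of_lt this)
        omega
      obtain ⟨u, hu, z, hz, hsum⟩ := mem_sup.1 hvUw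
      obtain ⟨c, rfl⟩ := mem_span_singleton.1 hz
      have hc : c ≠ 0 := by
        rintro rfl
        simp at hsum
        exact hvU (hsum ▸ hu)
      have : w = c⁻¹ • (v - u) := by
        rw [← hsum]; simp [smul_sub, smul_smul, inv_mul_cancel₀ hc]
      rw [this]
      exact Submodule.smul_mem _ _ (Submodule.sub_mem _ (mem_sup_right (mem_span_singleton_self v)) (mem_sup_left hu))
  have h1 : finrank F W ≤ finrank F U + 1 := by
    calc finrank F W ≤ finrank F ↥(U ⊔ span F {v}) := Submodule.finrank_mono key
    _ ≤ finrank F U + finrank F ↥(span F {v}) := by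
          have := finrank_sup_add_finrank_inf_eq U (span F {v})
          omega
    _ ≤ finrank F U + 1 := by
          have := finrank_span_singleton (K := F) (v := v) (by rintro rfl; exact hvD (Submodule.zero_mem _))
          omega
  have h2 : finrank F U < n + 1 := by
    rw [← hW]
    exact finrank_lt_finrank_of_lt (lt_of_le_of_ne hUW (by rintro rfl; exact hvU hvW))
  exact ⟨U, hDU, hUW, hvU, by omega⟩

lemma affine_hyperplane (B : AffineSubspace F V) (m : V) (hm : m ∈ B) (S : Set V)
    (hSB : S ⊆ (B : Set V)) (hmS : m ∉ affineSpan F S) (n : ℕ)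
    (hB : finrank F B.direction = n + 1) :
    ∃ B' : AffineSubspace F V, B' ≤ B ∧ ((B' : Set V)).Nonempty ∧
      finrank F B'.direction = n ∧ m ∉ B' ∧ S ⊆ (B' : Set V) := by
  classical
  obtain ⟨s₀, hs₀B, hmA⟩ : ∃ s₀, s₀ ∈ B ∧ m ∉ affineSpan F (insert s₀ S) := by
    rcases S.eq_empty_or_nonempty with rfl | ⟨s, hs⟩
    · have hdir : B.direction ≠ ⊥ := by
        intro h; rw [h] at hB; simp at hB
      obtain ⟨w, hw, hw0⟩ := Submodule.exists_mem_ne_zero_of_ne_bot hdir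
      refine ⟨w +ᵥ m, AffineSubspace.vadd_mem_of_mem_direction hw hm, ?_⟩
      intro h
      rw [show insert (w +ᵥ m) (∅ : Set V) = {w +ᵥ m} by simp,
        AffineSubspace.mem_affineSpan_singleton] at h
      exact hw0 (by have := h.symm; rwa [vadd_eq_add, add_eq_right] at this)
    · exact ⟨s, hSB hs, by rwa [Set.insert_eq_of_mem hs]⟩
  set A := affineSpan F (insert s₀ S) with hA
  have hs₀A : s₀ ∈ A := subset_affineSpan F _ (Set.mem_insert _ _)
  have hAB : A ≤ B := affineSpan_le.2 (Set.insert_subset hs₀B hSB)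
  have hv : m -ᵥ s₀ ∈ B.direction := AffineSubspace.vsub_mem_direction hm hs₀B
  have hvD : m -ᵥ s₀ ∉ A.direction := by
    intro h
    exact hmA (by simpa using AffineSubspace.vadd_mem_of_mem_direction h hs₀A)
  obtain ⟨W', hDW', hW'W, hvW', hrk⟩ :=
    linear_hyperplane A.direction B.direction (AffineSubspace.direction_le hAB) _ hv hvD n hB
  refine ⟨AffineSubspace.mk' s₀ W', ?_, ⟨s₀, AffineSubspace.self_mem_mk' _ _⟩, ?_, ?_, ?_⟩
  · intro x hx
    rw [AffineSubspace.mem_mk'] at hx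
    have := AffineSubspace.vadd_mem_of_mem_direction (hW'W hx) hs₀B
    simpa using this
  · rw [AffineSubspace.direction_mk']; exact hrk
  · rw [AffineSubspace.mem_mk']; exact hvW'
  · intro x hx
    rw [AffineSubspace.mem_coe, AffineSubspace.mem_mk']
    exact hDW' (AffineSubspace.vsub_mem_direction (subset_affineSpan F _ (Set.mem_insert_of_mem _ hx)) hs₀A)

lemma flag_aux : ∀ (n : ℕ) (B : AffineSubspace F V), ((B : Set V)).Nonempty →
    finrank F B.direction = n →
    ∀ (k : ℕ) (g : Fin k → V), Function.Injective g → (∀ i, g i ∈ B) →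
    (∀ i : Fin k, ∀ v ∈ affineSpan F (g '' Set.Ici i), g i ≤ v) →
    ∃ f : Fin (n+1) → V, affineSpan F (Set.range f) = B ∧
      (∀ j : Fin (n+1), ∀ v ∈ affineSpan F (f '' Set.Ici j), f j ≤ v) ∧
      ∃ ι : Fin k → Fin (n+1), StrictMono ι ∧ ∀ i, f (ι i) = g i := by
  intro n
  induction n with
  | zero =>
    rintro B ⟨pt, hpt⟩ hrk k g hinj hmem hleast
    rw [AffineSubspace.mem_coe] at hpt
    have hdir : B.direction = ⊥ := Submodule.finrank_eq_zero.1 hrk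
    have hpoint : ∀ x ∈ B, x = pt := by
      intro x hx
      have := AffineSubspace.vsub_mem_direction hx hpt
      rw [hdir, Submodule.mem_bot, vsub_eq_zero_iff_eq] at this
      exact this
    have hspan : affineSpan F (Set.range (fun _ : Fin 1 => pt)) = B := by
      apply le_antisymm
      · exact affineSpan_le.2 (by rintro x ⟨i, rfl⟩; exact hpt)
      · intro x hx
        rw [hpoint x hx]
        exact subset_affineSpan F _ ⟨0, rfl⟩
    refine ⟨fun _ => pt, hspan, ?_, fun _ => 0, ?_, ?_⟩
    · intro j v hv
      have hvB : v ∈ B := by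
        rw [← hspan]
        exact affineSpan_mono F (Set.image_subset_range _ _) hv
      rw [hpoint v hvB]
    · intro a b hab
      exact absurd (hinj (by rw [hpoint _ (hmem a), hpoint _ (hmem b)])) hab.ne
    · intro i
      exact (hpoint _ (hmem i)).symm
  | succ n IH =>
    rintro B hBne hrk k g hinj hmem hleast
    classical
    have hBne' : (Set.toFinset (B : Set V)).Nonempty := Set.toFinset_nonempty.2 hBne
    set m := (Set.toFinset (B : Set V)).min' hBne' with hm
    have hmB : m ∈ B := by
      have := Finset.min'_mem _ hBne'
      rwa [Set.mem_toFinset, AffineSubspace.mem_coe] at this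
    have hmin : ∀ x ∈ B, m ≤ x := fun x hx =>
      Finset.min'_le _ _ (Set.mem_toFinset.2 hx)
    -- common step
    have step : ∀ (k' : ℕ) (g' : Fin k' → V), (∀ i, g' i ∈ B) →
        m ∉ affineSpan F (Set.range g') →
        Function.Injective g' →
        (∀ i : Fin k', ∀ v ∈ affineSpan F (g' '' Set.Ici i), g' i ≤ v) →
        ∃ f : Fin (n+2) → V, affineSpan F (Set.range f) = B ∧
          (∀ j : Fin (n+2), ∀ v ∈ affineSpan F (f '' Set.Ici j), f j ≤ v) ∧
          f 0 = m ∧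
          ∃ ι' : Fin k' → Fin (n+1), StrictMono ι' ∧ ∀ i, f ((ι' i).succ) = g' i := by
      intro k' g' hmem' hnot hinj' hleast'
      obtain ⟨B', hB'B, hB'ne, hB'rk, hmB', hgB'⟩ :=
        affine_hyperplane B m hmB (Set.range g') (by rintro x ⟨i, rfl⟩; exact hmem' i)
          hnot n hrk
      obtain ⟨f', hspan', hleastf', ι', hι'mono, hι'⟩ :=
        IH B' hB'ne hB'rk k' g' hinj' (fun i => hgB' ⟨i, rfl⟩) hleast'
      set f : Fin (n+2) → V := Fin.cons m f' with hf
      have hrange : Set.range f = insert m (Set.range f') := Fin.range_cons m f'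
      have hrangef' : Set.range f' ⊆ (B' : Set V) := by
        rw [← hspan']; exact subset_affineSpan F _
      have hspan : affineSpan F (Set.range f) = B := by
        apply le_antisymm
        · rw [hrange]
          exact affineSpan_le.2 (Set.insert_subset hmB (hrangef'.trans hB'B))
        · obtain ⟨p', hp'⟩ := hB'ne
          rw [AffineSubspace.mem_coe] at hp'
          have hB'le : B' ≤ affineSpan F (Set.range f) := by
            rw [← hspan', hrange]
            exact affineSpan_mono F (Set.subset_insert _ _)
          have hmspan : m ∈ affineSpan F (Set.range f) := by
            rw [hrange]; exact subset_affineSpan F _ (Set.mem_insert _ _)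
          have hdirle : B'.direction < (affineSpan F (Set.range f)).direction := by
            refine lt_of_le_of_ne (AffineSubspace.direction_le hB'le) ?_
            intro heq
            have hv : m -ᵥ p' ∈ (affineSpan F (Set.range f)).direction :=
              AffineSubspace.vsub_mem_direction hmspan (hB'le hp')
            rw [← heq] at hv
            have : m ∈ B' := by
              have := AffineSubspace.vadd_mem_of_mem_direction hv hp'
              rwa [vsub_vadd] at this
            exact hmB' this
          have hdle : (affineSpan F (Set.range f)).direction ≤ B.direction :=
            AffineSubspace.direction_le (by
              rw [hrange]
              exact affineSpan_le.2 (Set.insert_subset hmB (hrangef'.trans hB'B)))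
          have hdeq : (affineSpan F (Set.range f)).direction = B.direction := by
            apply Submodule.eq_of_le_of_finrank_le hdle
            have := finrank_lt_finrank_of_lt hdirle
            omega
          intro b hb
          have : b -ᵥ m ∈ (affineSpan F (Set.range f)).direction := by
            rw [hdeq]; exact AffineSubspace.vsub_mem_direction hb hmB
          have := AffineSubspace.vadd_mem_of_mem_direction this hmspan
          rwa [vsub_vadd] at this
      refine ⟨f, hspan, ?_, rfl, ι', hι'mono, ?_⟩
      · intro j v hv
        rcases Fin.eq_zero_or_eq_succ j with rfl | ⟨j', rfl⟩
        · have : v ∈ B := by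
            rw [← hspan]
            exact affineSpan_mono F (Set.image_subset_range _ _) hv
          exact hmin v this
        · have himg : f '' Set.Ici j'.succ = f' '' Set.Ici j' := by
            rw [← succ_image_Ici, ← Set.image_comp]
            congr 1
          rw [himg] at hv
          have := hleastf' j' v hv
          rwa [show f j'.succ = f' j' by rw [hf]; simp]
      · intro i
        rw [show f ((ι' i).succ) = f' (ι' i) by rw [hf]; simp]
        exact hι' i
    by_cases hc : ∃ hk : 0 < k, g ⟨0, hk⟩ = m
    · obtain ⟨hk, heq⟩ := hc
      obtain ⟨k', rfl⟩ : ∃ k', k = k' + 1 := ⟨k - 1, (Nat.succ_pred_eq_of_pos hk).symm⟩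
      have heq0 : g 0 = m := heq
      set g' : Fin k' → V := fun i => g i.succ with hg'
      have hrangeg' : Set.range g' = g '' Set.range Fin.succ := by
        exact Set.range_comp g Fin.succ
      have hnot : m ∉ affineSpan F (Set.range g') := by
        intro hmem'
        rcases Nat.eq_zero_or_pos k' with rfl | hk'
        · rw [Set.range_eq_empty, AffineSubspace.span_empty] at hmem'
          simp [← AffineSubspace.mem_coe] at hmem'
        · obtain ⟨k'', rfl⟩ : ∃ k'', k' = k'' + 1 := ⟨k' - 1, (Nat.succ_pred_eq_of_pos hk').symm⟩
          have hr : Set.range (Fin.succ : Fin (k''+1) → Fin (k''+2)) = Set.Ici (0 : Fin (k''+1)).succ := by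
            rw [← succ_image_Ici, Ici_zero_fin, Set.image_univ]
          have h1 : g (0 : Fin (k''+1)).succ ≤ m := by
            apply hleast (0 : Fin (k''+1)).succ
            rwa [← hr, ← hrangeg']
          have h2 : g 0 ≤ g (0 : Fin (k''+1)).succ := by
            apply hleast 0
            exact subset_affineSpan F _ ⟨(0 : Fin (k''+1)).succ, Fin.zero_le _, rfl⟩
          have : g 0 = g (0 : Fin (k''+1)).succ := le_antisymm h2 (heq0 ▸ h1)
          exact Fin.succ_ne_zero _ (hinj this).symm
      obtain ⟨f, hspan, hleastf, hf0, ι', hι'mono, hι'⟩ :=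
        step k' g' (fun i => hmem i.succ) hnot
          (fun a b hab => Fin.succ_injective _ (hinj hab))
          (by
            intro i v hv
            apply hleast i.succ
            rwa [show g '' Set.Ici i.succ = g' '' Set.Ici i by
              rw [← succ_image_Ici, ← Set.image_comp]; rfl] )
      refine ⟨f, hspan, hleastf, Fin.cases 0 (fun i => (ι' i).succ), ?_, ?_⟩
      · intro a b hab
        rcases Fin.eq_zero_or_eq_succ b with rfl | ⟨j, rfl⟩
        · exact absurd hab (Fin.not_lt_zero _)
        · rcases Fin.eq_zero_or_eq_succ a with rfl | ⟨i, rfl⟩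
          · simpa using Fin.succ_pos (ι' j)
          · simp only [Fin.cases_succ]
            exact Fin.succ_lt_succ_iff.2 (hι'mono (Fin.succ_lt_succ_iff.1 hab))
      · intro i
        rcases Fin.eq_zero_or_eq_succ i with rfl | ⟨j, rfl⟩
        · simpa [hf0] using heq0.symm
        · simpa using hι' j
    · have hnot : m ∉ affineSpan F (Set.range g) := by
        intro hmem'
        rcases Nat.eq_zero_or_pos k with rfl | hk
        · rw [Set.range_eq_empty, AffineSubspace.span_empty] at hmem'
          simp [← AffineSubspace.mem_coe] at hmem'
        · have h1 : g ⟨0, hk⟩ ≤ m := by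
            apply hleast ⟨0, hk⟩
            rwa [show g '' Set.Ici (⟨0, hk⟩ : Fin k) = Set.range g by
              rw [show Set.Ici (⟨0, hk⟩ : Fin k) = Set.univ from
                Set.eq_univ_of_forall fun j => Fin.mk_le_of_le_val (Nat.zero_le _), Set.image_univ]]
          have h2 : m ≤ g ⟨0, hk⟩ := hmin _ (hmem _)
          exact hc ⟨hk, le_antisymm h1 h2⟩
      obtain ⟨f, hspan, hleastf, hf0, ι', hι'mono, hι'⟩ :=
        step k g hmem hnot hinj hleast
      exact ⟨f, hspan, hleastf, fun i => (ι' i).succ,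
        fun a b hab => Fin.succ_lt_succ_iff.2 (hι'mono hab), hι'⟩

end Aux

/-- Path-extension lemma for the flag DAG: any sequence `g_1, …, g_k` of pairwise
distinct points of a `d`-dimensional vector space over a finite field, each `g_i` being
the `⊴`-least point of the affine span of `{g_i, …, g_k}`, extends to a maximal such
sequence `f_0, …, f_d` affinely spanning the whole space and containing `g` as a
subsequence. -/
theorem flag_path_extension (F : Type) [Field F] [Fintype F] (q : ℕ)
    (hq : Fintype.card F = q) (d : ℕ) (V : Type) [AddCommGroup V] [Module F V]
    [Fintype V] [LinearOrder V] (hdim : Module.finrank F V = d)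
    (k : ℕ) (g : Fin k → V) (hinj : Function.Injective g)
    (hleast : ∀ i : Fin k, ∀ v ∈ affineSpan F (g '' Set.Ici i), g i ≤ v) :
    ∃ f : Fin (d + 1) → V,
      affineSpan F (Set.range f) = ⊤ ∧
      (∀ j : Fin (d + 1), ∀ v ∈ affineSpan F (f '' Set.Ici j), f j ≤ v) ∧
      ∃ ι : Fin k → Fin (d + 1), StrictMono ι ∧ ∀ i, f (ι i) = g i := by
  have h1 : ((⊤ : AffineSubspace F V) : Set V).Nonempty := ⟨0, trivial⟩
  have h2 : Module.finrank F (⊤ : AffineSubspace F V).direction = d := by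
    rw [AffineSubspace.direction_top, finrank_top, hdim]
  obtain ⟨f, hspan, hleastf, ι, hmono, hι⟩ :=
    flag_aux d ⊤ h1 h2 k g hinj (fun _ => trivial) hleast
  exact ⟨f, hspan, hleastf, ι, hmono, hι⟩
end
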